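/- Let G be a group and χE, χE', χC, χC' : G →* (ZMod 5)ˣ group homomorphisms such that: χE·χE' = χC·χC'; the common product χ := χE·χE' has order 4; χE' has order 4; ker χE = ker χC; ker χE' = ker χC'; and ker χE ≠ ker χE'. Then χE = χC and χE' = χC'. -/

import Mathlib

private lemma aux1 : ∀ x y : (ZMod 5)ˣ, x^2 = 1 → y^2 = 1 → (x = 1 ↔ y = 1) → y = x := by
  decide

private lemma aux2 : ∀ x y : (ZMod 5)ˣ, x^2 ≠ 1 → y^2 ≠ 1 → y = x ∨ y = x^3 := by
  decide

private lemma aux3 : ∀ x y : (ZMod 5)ˣ, x^2 ≠ 1 → y = x^0 ∨ y = x^1 ∨ y = x^2 ∨ y = x^3 := by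
  decide

private lemma key {G : Type*} [Group G] (χ ψ : G →* (ZMod 5)ˣ)
    (hker : χ.ker = ψ.ker) : ψ = χ ∨ ψ = χ^3 := by
  by_cases h : ∀ g, (χ g)^2 = 1
  · left
    refine MonoidHom.ext fun g => ?_
    have h1 : (ψ g)^2 = 1 := by
      have hm : g^2 ∈ χ.ker := by
        rw [MonoidHom.mem_ker, map_pow, h g]
      rw [hker, MonoidHom.mem_ker, map_pow] at hm
      exact hm
    have h2 : χ g = 1 ↔ ψ g = 1 := by
      rw [← MonoidHom.mem_ker, ← MonoidHom.mem_ker, hker]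
    exact aux1 _ _ (h g) h1 h2
  · push_neg at h
    obtain ⟨g₀, hx⟩ := h
    have hy : (ψ g₀)^2 ≠ 1 := by
      intro hy
      apply hx
      have hm : g₀^2 ∈ ψ.ker := by
        rw [MonoidHom.mem_ker, map_pow, hy]
      rw [← hker, MonoidHom.mem_ker, map_pow] at hm
      exact hm
    have main : ∀ j : ℕ, ψ g₀ = (χ g₀)^j → ψ = χ^j := by
      intro j hj
      refine MonoidHom.ext fun g => ?_
      have hk : ∃ k : ℕ, χ g = (χ g₀)^k := by
        rcases aux3 (χ g₀) (χ g) hx with h' | h' | h' | h'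
        exacts [⟨0, h'⟩, ⟨1, h'⟩, ⟨2, h'⟩, ⟨3, h'⟩]
      obtain ⟨k, hk⟩ := hk
      have hmem : g * (g₀^k)⁻¹ ∈ χ.ker := by
        rw [MonoidHom.mem_ker, map_mul, map_inv, map_pow, hk, mul_inv_cancel]
      rw [hker, MonoidHom.mem_ker, map_mul, map_inv, map_pow, hj,
        mul_inv_eq_one] at hmem
      rw [MonoidHom.pow_apply, hmem, ← pow_mul, hk, ← pow_mul, Nat.mul_comm]
    rcases aux2 (χ g₀) (ψ g₀) hx hy with h' | h'
    · left
      have := main 1 (by simpa using h')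
      exact this.trans (pow_one χ)
    · right; exact main 3 h'

theorem stmt8 (G : Type*) [Group G]
    (χE χE' χC χC' : G →* (ZMod 5)ˣ)
    (hprod : χE * χE' = χC * χC')
    (hord : orderOf (χE * χE') = 4)
    (hordE' : orderOf χE' = 4)
    (hkE : χE.ker = χC.ker)
    (hkE' : χE'.ker = χC'.ker)
    (hne : χE.ker ≠ χE'.ker) :
    χE = χC ∧ χE' = χC' := by
  have sq_of_cube : ∀ x : G →* (ZMod 5)ˣ, x = x^3 → x^2 = 1 := by
    intro x hx
    calc x^2 = x^3 * x⁻¹ := by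
          conv_rhs => rw [pow_succ]
          rw [mul_inv_cancel_right]
    _ = x * x⁻¹ := by rw [← hx]
    _ = 1 := mul_inv_cancel x
  have cancel_left : ∀ a b c : G →* (ZMod 5)ˣ, a * b = a * c → b = c := by
    intro a b c h
    rw [← inv_mul_cancel_left a b, h]
    exact inv_mul_cancel_left a c
  have cancel_right : ∀ a b c : G →* (ZMod 5)ˣ, b * a = c * a → b = c := by
    intro a b c h
    rw [← mul_inv_cancel_right b a, h]
    exact mul_inv_cancel_right c a
  rcases key χE χC hkE with hC | hC <;> rcases key χE' χC' hkE' with hC' | hC'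
  · exact ⟨hC.symm, hC'.symm⟩
  · exfalso
    rw [hC, hC'] at hprod
    have h1 : χE' = χE'^3 := cancel_left _ _ _ hprod
    have := orderOf_dvd_of_pow_eq_one (sq_of_cube _ h1)
    rw [hordE'] at this
    norm_num at this
  · rw [hC, hC'] at hprod
    have h1 : χE = χE^3 := cancel_right _ _ _ hprod
    have h2 : χE^2 = 1 := sq_of_cube _ h1
    refine ⟨?_, hC'.symm⟩
    rw [hC, pow_succ, h2]
    exact (one_mul χE).symm
  · exfalso
    rw [hC, hC', ← mul_pow] at hprod
    have := orderOf_dvd_of_pow_eq_one (sq_of_cube _ hprod)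
    rw [hord] at this
    norm_num at this
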